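/- Let (G, H, Γ) be a cut-and-project scheme with W₀ ⊆ H a compact neighbourhood of the identity, and let P₀ = π_G((G × W₀) ∩ Γ). If Γ is a uniform (cocompact) lattice in G × H, then P₀ is relatively dense in G: there exists a compact set K ⊆ G with P₀·K = G. -/

import Mathlib

open scoped Pointwise
open Topology MeasureTheory

/-- A lattice in a locally compact group: a discrete subgroup admitting a measurable
fundamental domain of finite Haar measure. -/
def IsLatticeSubgroup {G : Type*} [Group G] [TopologicalSpace G] [MeasurableSpace G]
    (Γ : Subgroup G) : Prop :=
  DiscreteTopology ↥Γ ∧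
    ∃ μ : Measure G, μ.IsHaarMeasure ∧
      ∃ D : Set G, MeasurableSet D ∧ μ D ≠ ⊤ ∧ ∀ x : G, ∃! γ : Γ, (γ : G) * x ∈ D

/-- A cut-and-project scheme `(G, H, Γ)`: `Γ` is a lattice in `G × H`, the projection to
`G` is injective on `Γ` and the projection of `Γ` to `H` is dense. -/
def IsCutAndProjectScheme {G H : Type*} [Group G] [Group H]
    [TopologicalSpace G] [TopologicalSpace H] [MeasurableSpace G] [MeasurableSpace H]
    (Γ : Subgroup (G × H)) : Prop :=
  IsLatticeSubgroup Γ ∧ Set.InjOn Prod.fst (Γ : Set (G × H)) ∧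
    Dense (Prod.snd '' (Γ : Set (G × H)))

/-- If `(G,H,Γ)` is a cut-and-project scheme, `W₀` a compact
neighbourhood of the identity in `H`, and `Γ` is cocompact in `G × H`, then the model set
`P₀ = π_G((G × W₀) ∩ Γ)` is relatively dense in `G`. -/
theorem modelSet_relativelyDense_of_uniform
    {G H : Type*} [Group G] [Group H] [TopologicalSpace G] [TopologicalSpace H]
    [IsTopologicalGroup G] [IsTopologicalGroup H]
    [LocallyCompactSpace G] [LocallyCompactSpace H]
    [MeasurableSpace G] [MeasurableSpace H]
    (Γ : Subgroup (G × H)) (hΓ : IsCutAndProjectScheme Γ)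
    (W₀ : Set H) (hW₀c : IsCompact W₀) (hW₀n : W₀ ∈ 𝓝 (1 : H))
    (huniform : ∃ K : Set (G × H), IsCompact K ∧ (Γ : Set (G × H)) * K = Set.univ) :
    ∃ K : Set G, IsCompact K ∧
      (Prod.fst '' ((Set.univ ×ˢ W₀) ∩ (Γ : Set (G × H)))) * K = Set.univ := by
  obtain ⟨K', hK'c, hK'⟩ := huniform
  obtain ⟨-, -, hdense⟩ := hΓ
  have hUopen : IsOpen (interior W₀) := isOpen_interior
  have h1U : (1 : H) ∈ interior W₀ := mem_interior_iff_mem_nhds.2 hW₀n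
  have hC : IsCompact ((Prod.snd '' K')⁻¹ : Set H) := (hK'c.image continuous_snd).inv
  have hcov : ((Prod.snd '' K')⁻¹ : Set H) ⊆
      ⋃ δ : ↥Γ, interior W₀ * {(δ : G × H).2} := by
    intro h _
    have hne : ((interior W₀)⁻¹ * {h} ∩ Prod.snd '' (Γ : Set (G × H))).Nonempty := by
      apply hdense.inter_open_nonempty
      · exact hUopen.inv.mul_right
      · exact ⟨h, 1, by simpa using h1U, h, rfl, one_mul h⟩
    obtain ⟨d, ⟨u, hu, x, hx, hux⟩, γ, hγ, hγ2⟩ := hne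
    rw [Set.mem_singleton_iff] at hx
    subst hx
    refine Set.mem_iUnion.2 ⟨⟨γ, hγ⟩, u⁻¹, Set.inv_mem_inv.1 (by simpa using hu),
      (⟨γ, hγ⟩ : ↥Γ).1.2, rfl, ?_⟩
    simp only [hγ2]
    rw [← hux]; group
  obtain ⟨t, ht⟩ := hC.elim_finite_subcover
    (fun δ : ↥Γ => interior W₀ * {(δ : G × H).2}) (fun δ => hUopen.mul_right) hcov
  refine ⟨⋃ δ ∈ t, ({(δ : G × H).1} : Set G) * (Prod.fst '' K'), ?_, ?_⟩
  · exact t.finite_toSet.isCompact_biUnion fun δ _ =>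
      isCompact_singleton.mul (hK'c.image continuous_fst)
  · refine Set.eq_univ_iff_forall.2 fun g => ?_
    have hg : ((g, 1) : G × H) ∈ (Γ : Set (G × H)) * K' := by
      rw [hK']; exact Set.mem_univ _
    obtain ⟨γ, hγ, k, hk, hγk⟩ := hg
    have hγ2 : γ.2 ∈ ((Prod.snd '' K')⁻¹ : Set H) := by
      rw [Set.mem_inv]
      refine ⟨k, hk, ?_⟩
      have h2 : γ.2 * k.2 = 1 := congrArg Prod.snd hγk
      exact eq_inv_of_mul_eq_one_right h2
    have := ht hγ2
    simp only [Set.mem_iUnion] at this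
    obtain ⟨δ, hδt, u, hu, x, hx, hux⟩ := this
    rw [Set.mem_singleton_iff] at hx
    subst hx
    have hpΓ : γ * (δ : G × H)⁻¹ ∈ Γ := mul_mem hγ (inv_mem δ.2)
    have hp2 : (γ * (δ : G × H)⁻¹).2 ∈ W₀ := by
      have : (γ * (δ : G × H)⁻¹).2 = u := by
        simp only [Prod.snd_mul, Prod.snd_inv, ← hux]; group
      rw [this]; exact interior_subset hu
    have hg1 : g = (γ * (δ : G × H)⁻¹).1 * ((δ : G × H).1 * k.1) := by
      have h1 : γ.1 * k.1 = g := congrArg Prod.fst hγk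
      simp only [Prod.fst_mul, Prod.fst_inv, ← h1]; group
    rw [hg1]
    refine Set.mul_mem_mul ⟨γ * (δ : G × H)⁻¹, ⟨⟨Set.mem_univ _, hp2⟩, hpΓ⟩, rfl⟩ ?_
    exact Set.mem_biUnion hδt (Set.mul_mem_mul rfl ⟨k, hk, rfl⟩)
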